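/- Eigenfunctions of the uniform k-player dynamic: suppose the potential is constant (all payoff parameters zero) and meetings of dimension k are drawn uniformly, so the transition kernel is P_k(S, S') = Σ_{μ : S' ∈ N_k(μ, S)} 1/(n · C(n−1, k−1) · 2^k). Then for every subset I ⊆ I × I and every state S, Σ_{S' ∈ 𝒮_n} P_k(S, S') e_I(S') = λ_{k,I} · e_I(S), where λ_{k,I} = [Σ_{i : (i,i) ∉ I} C(n−1−|I_i|, k−1)] / [n · C(n−1, k−1)] and I_i = {j ≠ i : (i,j) ∈ I} (with C(m, r) = 0 for m < r). In particular the 2^{n²} pairs (λ_{k,I}, e_I) are a complete eigensystem of P_k. -/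

import Mathlib

open Finset

noncomputable section

/-- A network state: the diagonal entry `S i i` is player `i`'s action status `a_i`,
and the off-diagonal entry `S i j` (for `i ≠ j`) is the link status `g_{ij}`. -/
abbrev NetState (n : ℕ) := Fin n → Fin n → Bool

/-- Numerical (0/1) value of a Boolean coordinate. -/
def bv (x : Bool) : ℝ := if x then 1 else 0

/-- Player `i`'s payoff
`u_i(S) = a_i v_i + h a_i Σ_{j≠i} a_j + φ a_i Σ_{j≠i} g_{ij} g_{ji} a_j
  + Σ_{j≠i} g_{ij} w_{ij} + m Σ_{j≠i} g_{ij} g_{ji}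
  + q Σ_{j,l pairwise distinct from each other and from i} g_{ij} g_{jl} g_{li}`. -/
def payoff (n : ℕ) (v : Fin n → ℝ) (w : Fin n → Fin n → ℝ) (h φ m q : ℝ)
    (S : NetState n) (i : Fin n) : ℝ :=
  bv (S i i) * v i
    + h * bv (S i i) * ∑ j ∈ univ.filter (fun j => j ≠ i), bv (S j j)
    + φ * bv (S i i) * ∑ j ∈ univ.filter (fun j => j ≠ i), bv (S i j) * bv (S j i) * bv (S j j)
    + ∑ j ∈ univ.filter (fun j => j ≠ i), bv (S i j) * w i j
    + m * ∑ j ∈ univ.filter (fun j => j ≠ i), bv (S i j) * bv (S j i)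
    + q * ∑ j ∈ univ.filter (fun j => j ≠ i),
        ∑ l ∈ univ.filter (fun l => l ≠ i ∧ l ≠ j),
          bv (S i j) * bv (S j l) * bv (S l i)

/-- The potential
`Φ(S) = Σ_i a_i v_i + (h/2) Σ_{i≠j} a_i a_j + (φ/2) Σ_{i≠j} a_i a_j g_{ij} g_{ji}
  + Σ_{i≠j} g_{ij} w_{ij} + (m/2) Σ_{i≠j} g_{ij} g_{ji}
  + (q/3) Σ_{i,j,l pairwise distinct} g_{ij} g_{jl} g_{li}`. -/
def potential (n : ℕ) (v : Fin n → ℝ) (w : Fin n → Fin n → ℝ) (h φ m q : ℝ)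
    (S : NetState n) : ℝ :=
  (∑ i, bv (S i i) * v i)
    + (h / 2) * ∑ i, ∑ j ∈ univ.filter (fun j => j ≠ i), bv (S i i) * bv (S j j)
    + (φ / 2) * ∑ i, ∑ j ∈ univ.filter (fun j => j ≠ i),
        bv (S i i) * bv (S j j) * bv (S i j) * bv (S j i)
    + (∑ i, ∑ j ∈ univ.filter (fun j => j ≠ i), bv (S i j) * w i j)
    + (m / 2) * ∑ i, ∑ j ∈ univ.filter (fun j => j ≠ i), bv (S i j) * bv (S j i)
    + (q / 3) * ∑ i, ∑ j ∈ univ.filter (fun j => j ≠ i),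
        ∑ l ∈ univ.filter (fun l => l ≠ i ∧ l ≠ j), bv (S i j) * bv (S j l) * bv (S l i)

/-- `S'` belongs to the neighborhood `N_k((i,J), S)`: it agrees with `S` on all coordinates
except possibly `a_i` (the coordinate `(i,i)`) and the links `{g_{ij} : j ∈ J}`. -/
def inNbhd (n : ℕ) (i : Fin n) (J : Finset (Fin n)) (S S' : NetState n) : Prop :=
  ∀ x y : Fin n, ¬(x = i ∧ (y = i ∨ y ∈ J)) → S' x y = S x y

open scoped Classical in
/-- The neighborhood `N_k((i,J), S)` as a finite set of states. -/
noncomputable def nbhd (n : ℕ) (i : Fin n) (J : Finset (Fin n)) (S : NetState n) :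
    Finset (NetState n) :=
  univ.filter (fun S' => inNbhd n i J S S')

open scoped Classical in
/-- Meetings of dimension `k`: pairs `(i, J)` with `i ∉ J` and `|J| = k - 1`. -/
noncomputable def meetings (n k : ℕ) : Finset (Fin n × Finset (Fin n)) :=
  univ.filter (fun μ => μ.1 ∉ μ.2 ∧ μ.2.card = k - 1)

/-- The sign character `e_K(S) = Π_{(i,j)∈K, i≠j} (−1)^{g_{ij}} · Π_{(i,i)∈K} (−1)^{a_i}`
(in the unified coordinate representation, the coordinate `(i,j)` of `S` is `S i j`). -/
def charFn (n : ℕ) (K : Finset (Fin n × Fin n)) (S : NetState n) : ℝ :=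
  ∏ p ∈ K, (if S p.1 p.2 then (-1 : ℝ) else 1)

/-- `I_i = {j ≠ i : (i,j) ∈ K}`. -/
def lamIdx (n : ℕ) (K : Finset (Fin n × Fin n)) (i : Fin n) : Finset (Fin n) :=
  univ.filter (fun j => j ≠ i ∧ (i, j) ∈ K)

open scoped Classical in
/-- The eigenvalue `λ_{k,K} = [Σ_{i : (i,i) ∉ K} C(n−1−|I_i|, k−1)] / [n · C(n−1, k−1)]`. -/
noncomputable def lam (n k : ℕ) (K : Finset (Fin n × Fin n)) : ℝ :=
  (∑ i ∈ univ.filter (fun i => (i, i) ∉ K),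
      (((n - 1 - (lamIdx n K i).card).choose (k - 1) : ℕ) : ℝ))
    / ((n : ℝ) * (((n - 1).choose (k - 1) : ℕ) : ℝ))

open scoped Classical in
/-- Transition kernel of the uniform `k`-player dynamic (constant potential, uniform meetings):
`P_k(S, S') = Σ_{μ : S' ∈ N_k(μ, S)} 1/(n · C(n−1, k−1) · 2^k)`. -/
noncomputable def uKernel (n k : ℕ) (S S' : NetState n) : ℝ :=
  ∑ _μ ∈ (meetings n k).filter (fun μ => S' ∈ nbhd n μ.1 μ.2 S),
    1 / ((n : ℝ) * (((n - 1).choose (k - 1) : ℕ) : ℝ) * 2 ^ k)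

-- AUX START
open scoped Classical in
noncomputable def nbhdC (n : ℕ) (C : Finset (Fin n × Fin n)) (S : NetState n) :
    Finset (NetState n) :=
  univ.filter (fun S' => ∀ p : Fin n × Fin n, p ∉ C → S' p.1 p.2 = S p.1 p.2)

lemma mem_nbhdC (n : ℕ) (C : Finset (Fin n × Fin n)) (S S' : NetState n) :
    S' ∈ nbhdC n C S ↔ ∀ p : Fin n × Fin n, p ∉ C → S' p.1 p.2 = S p.1 p.2 := by
  classical simp [nbhdC]

def setCoord (n : ℕ) (p : Fin n × Fin n) (b : Bool) (S : NetState n) : NetState n :=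
  fun x y => if x = p.1 ∧ y = p.2 then b else S x y

lemma setCoord_self (n : ℕ) (p : Fin n × Fin n) (b : Bool) (S : NetState n) :
    setCoord n p b S p.1 p.2 = b := if_pos ⟨rfl, rfl⟩

lemma setCoord_ne (n : ℕ) (p q : Fin n × Fin n) (b : Bool) (S : NetState n) (h : q ≠ p) :
    setCoord n p b S q.1 q.2 = S q.1 q.2 := by
  apply if_neg
  rintro ⟨h1, h2⟩
  exact h (Prod.ext h1 h2)

lemma charFn_setCoord_not_mem (n : ℕ) (p : Fin n × Fin n) (b : Bool)
    (K : Finset (Fin n × Fin n)) (S : NetState n) (hp : p ∉ K) :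
    charFn n K (setCoord n p b S) = charFn n K S := by
  unfold charFn
  refine Finset.prod_congr rfl fun q hq => ?_
  rw [setCoord_ne n p q b S (fun h => hp (h ▸ hq))]

lemma nbhdC_sum (n : ℕ) (C K : Finset (Fin n × Fin n)) (S : NetState n) :
    ∑ S' ∈ nbhdC n C S, charFn n K S'
      = if Disjoint K C then 2 ^ C.card * charFn n K S else 0 := by
  classical
  induction C using Finset.induction with
  | empty =>
    have h1 : nbhdC n ∅ S = {S} := by
      ext S'
      simp only [mem_nbhdC, Finset.notMem_empty, mem_singleton]
      constructor
      · intro h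
        funext x y
        exact h (x, y) (fun hx => hx)
      · rintro rfl p _; rfl
    simp [h1]
  | @insert p C hp ih =>
    have stateeq : ∀ S' ∈ nbhdC n (insert p C) S,
        setCoord n p (S' p.1 p.2) (setCoord n p (S p.1 p.2) S') = S' := by
      intro S' hS'
      funext a b
      set q : Fin n × Fin n := (a, b) with hq
      by_cases hqp : q = p
      · rw [show a = p.1 from congrArg Prod.fst hqp, show b = p.2 from congrArg Prod.snd hqp]
        exact setCoord_self n p _ _
      · show setCoord n p _ _ q.1 q.2 = S' q.1 q.2
        rw [setCoord_ne n p q _ _ hqp, setCoord_ne n p q _ _ hqp]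
    have key : ∑ S' ∈ nbhdC n (insert p C) S, charFn n K S'
        = ∑ x ∈ (univ : Finset Bool) ×ˢ nbhdC n C S, charFn n K (setCoord n p x.1 x.2) := by
      refine Finset.sum_nbij' (i := fun S' => (S' p.1 p.2, setCoord n p (S p.1 p.2) S'))
        (j := fun x => setCoord n p x.1 x.2) ?_ ?_ (fun a ha => stateeq a ha) ?_
        (fun a ha => by rw [stateeq a ha])
      · intro S' hS'
        rw [mem_nbhdC] at hS'
        simp only [Finset.mem_product, mem_univ, true_and, mem_nbhdC]
        intro q hq
        by_cases hqp : q = p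
        · subst hqp; exact setCoord_self n q _ S'
        · rw [setCoord_ne n p q _ S' hqp]
          exact hS' q (by simp [hqp, hq])
      · intro x hx
        simp only [Finset.mem_product, mem_univ, true_and] at hx
        rw [mem_nbhdC] at hx ⊢
        intro q hq
        simp only [Finset.mem_insert, not_or] at hq
        rw [setCoord_ne n p q _ _ hq.1]
        exact hx q hq.2
      · intro x hx
        simp only [Finset.mem_product, mem_univ, true_and] at hx
        rw [mem_nbhdC] at hx
        have h1 : setCoord n p x.1 x.2 p.1 p.2 = x.1 := setCoord_self n p x.1 x.2
        refine Prod.ext h1 ?_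
        show setCoord n p (S p.1 p.2) (setCoord n p x.1 x.2) = x.2
        funext a b
        set q : Fin n × Fin n := (a, b) with hq
        by_cases hqp : q = p
        · have e1 : setCoord n p (S p.1 p.2) (setCoord n p x.1 x.2) p.1 p.2 = S p.1 p.2 :=
            setCoord_self n p _ _
          have e2 : x.2 p.1 p.2 = S p.1 p.2 := hx p hp
          rw [show a = p.1 from congrArg Prod.fst hqp, show b = p.2 from congrArg Prod.snd hqp]
          rw [e1, e2]
        · show setCoord n p _ _ q.1 q.2 = x.2 q.1 q.2
          rw [setCoord_ne n p q _ _ hqp, setCoord_ne n p q _ _ hqp]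
    rw [key, Finset.sum_product]
    by_cases hpK : p ∈ K
    · have hsplit : ∀ (b : Bool) (S'' : NetState n),
          charFn n K (setCoord n p b S'')
            = (if b then (-1:ℝ) else 1) * charFn n (K.erase p) S'' := by
        intro b S''
        unfold charFn
        rw [← Finset.mul_prod_erase K _ hpK, setCoord_self]
        congr 1
        refine Finset.prod_congr rfl fun q hq => ?_
        rw [setCoord_ne n p q b S'' (Finset.ne_of_mem_erase hq)]
      have hnd : ¬ Disjoint K (insert p C) := by
        rw [Finset.disjoint_insert_right]
        tauto
      rw [if_neg hnd]
      simp only [hsplit]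
      rw [Fintype.sum_bool]
      simp only [if_true, if_false]
      rw [← Finset.sum_add_distrib]
      simp [add_comm]
    · have hsame : ∀ (b : Bool) (S'' : NetState n),
          charFn n K (setCoord n p b S'') = charFn n K S'' :=
        fun b S'' => charFn_setCoord_not_mem n p b K S'' hpK
      simp only [hsame]
      rw [Fintype.sum_bool, ih, Finset.card_insert_of_notMem hp]
      have hiff : Disjoint K (insert p C) ↔ Disjoint K C := by
        rw [Finset.disjoint_insert_right]; simp [hpK]
      rw [if_congr hiff rfl rfl]
      by_cases hd : Disjoint K C
      · rw [if_pos hd, if_pos hd]; ring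
      · rw [if_neg hd, if_neg hd]; ring

lemma nbhd_eq_nbhdC (n : ℕ) (i : Fin n) (J : Finset (Fin n)) (S : NetState n) :
    nbhd n i J S = nbhdC n ({i} ×ˢ insert i J) S := by
  classical
  ext S'
  simp only [nbhd, mem_nbhdC, Finset.mem_filter, mem_univ, true_and]
  simp only [inNbhd]
  constructor
  · intro h p hp
    refine h p.1 p.2 fun ⟨h1, h2⟩ => hp ?_
    simp only [Finset.mem_product, Finset.mem_singleton, Finset.mem_insert]
    exact ⟨h1, h2⟩
  · intro h x y hxy
    refine h (x, y) fun hm => hxy ?_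
    simp only [Finset.mem_product, Finset.mem_singleton, Finset.mem_insert] at hm
    exact hm

lemma nbhd_sum (n k : ℕ) (hk : 1 ≤ k) (i : Fin n) (J : Finset (Fin n))
    (hiJ : i ∉ J) (hJ : J.card = k - 1) (K : Finset (Fin n × Fin n)) (S : NetState n) :
    ∑ S' ∈ nbhd n i J S, charFn n K S'
      = if ∀ y ∈ insert i J, (i, y) ∉ K then (2:ℝ) ^ k * charFn n K S else 0 := by
  classical
  rw [nbhd_eq_nbhdC, nbhdC_sum]
  have hcard : ({i} ×ˢ insert i J).card = k := by
    rw [Finset.card_product, Finset.card_singleton, one_mul,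
      Finset.card_insert_of_notMem hiJ, hJ]
    omega
  have hdisj : Disjoint K ({i} ×ˢ insert i J) ↔ ∀ y ∈ insert i J, (i, y) ∉ K := by
    rw [Finset.disjoint_right]
    constructor
    · intro h y hy
      exact h (Finset.mem_product.mpr ⟨Finset.mem_singleton_self i, hy⟩)
    · intro h p hp
      simp only [Finset.mem_product, Finset.mem_singleton] at hp
      have : p = (i, p.2) := Prod.ext hp.1 rfl
      rw [this]
      exact h p.2 hp.2
  rw [hcard, if_congr hdisj rfl rfl]


-- AUXC START
open scoped Classical in
lemma fiber_card (n k : ℕ) (K : Finset (Fin n × Fin n)) (i : Fin n) :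
    ((((meetings n k).filter (fun μ => ∀ y ∈ insert μ.1 μ.2, (μ.1, y) ∉ K)).filter
        (fun μ => μ.1 = i)).card)
      = if (i, i) ∉ K then (n - 1 - (lamIdx n K i).card).choose (k - 1) else 0 := by
  classical
  set A : Finset (Fin n) := univ.filter (fun j => j ≠ i ∧ (i, j) ∉ K) with hA
  have hAcard : A.card = n - 1 - (lamIdx n K i).card := by
    have h1 : A = (univ.filter (fun j => j ≠ i)) \ lamIdx n K i := by
      ext j
      simp only [hA, lamIdx, Finset.mem_filter, Finset.mem_sdiff, mem_univ, true_and]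
      tauto
    have h2 : lamIdx n K i ⊆ univ.filter (fun j => j ≠ i) := by
      intro j hj
      simp only [lamIdx, Finset.mem_filter, mem_univ, true_and] at hj ⊢
      exact hj.1
    have h3 : (univ.filter (fun j => j ≠ i)).card = n - 1 := by
      rw [Finset.filter_ne', Finset.card_erase_of_mem (mem_univ i), Finset.card_univ,
        Fintype.card_fin]
    rw [h1, Finset.card_sdiff_of_subset h2, h3]
  by_cases hiK : (i, i) ∈ K
  · rw [if_neg (by simpa using hiK)]
    convert Finset.card_empty
    rw [Finset.filter_filter, Finset.eq_empty_iff_forall_notMem]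
    intro μ hμ
    simp only [Finset.mem_filter] at hμ
    obtain ⟨-, hcond, h1⟩ := hμ
    exact hcond i (by rw [h1]; exact Finset.mem_insert_self _ _) (by rw [h1]; exact hiK)
  · rw [if_pos (by simpa using hiK)]
    have heq : ((meetings n k).filter (fun μ => ∀ y ∈ insert μ.1 μ.2, (μ.1, y) ∉ K)).filter
        (fun μ => μ.1 = i) = {i} ×ˢ Finset.powersetCard (k - 1) A := by
      ext μ
      simp only [Finset.mem_filter, meetings, mem_univ, true_and, Finset.mem_product,
        Finset.mem_singleton, Finset.mem_powersetCard]
      constructor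
      · rintro ⟨⟨⟨hnm, hcard⟩, hcond⟩, h1⟩
        refine ⟨h1, fun j hj => ?_, hcard⟩
        simp only [hA, Finset.mem_filter, mem_univ, true_and]
        subst h1
        exact ⟨fun hji => hnm (hji ▸ hj), hcond j (Finset.mem_insert_of_mem hj)⟩
      · rintro ⟨h1, hsub, hcard⟩
        have hAprop : ∀ j ∈ μ.2, j ≠ i ∧ (i, j) ∉ K := by
          intro j hj
          have := hsub hj
          simpa [hA] using this
        refine ⟨⟨⟨fun hmm => ?_, hcard⟩, ?_⟩, h1⟩
        · exact (hAprop μ.1 hmm).1 (h1)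
        · intro y hy
          rw [h1] at hy ⊢
          rcases Finset.mem_insert.mp hy with rfl | hy'
          · exact hiK
          · exact (hAprop y hy').2
    rw [heq, Finset.card_product, Finset.card_singleton, one_mul,
      Finset.card_powersetCard, hAcard]

open scoped Classical in
lemma count_meetings (n k : ℕ) (K : Finset (Fin n × Fin n)) :
    ((((meetings n k).filter (fun μ => ∀ y ∈ insert μ.1 μ.2, (μ.1, y) ∉ K)).card : ℕ) : ℝ)
      = ∑ i ∈ univ.filter (fun i => (i, i) ∉ K),
          (((n - 1 - (lamIdx n K i).card).choose (k - 1) : ℕ) : ℝ) := by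
  classical
  rw [Finset.card_eq_sum_card_fiberwise
    (f := Prod.fst) (t := univ) (fun μ _ => mem_univ _)]
  push_cast
  rw [Finset.sum_filter]
  refine Finset.sum_congr rfl fun i _ => ?_
  have := fiber_card n k K i
  rw [show ((meetings n k).filter
      (fun μ => ∀ y ∈ insert μ.1 μ.2, (μ.1, y) ∉ K)).filter (fun μ => μ.1 = i)
    = ((meetings n k).filter
      (fun μ => ∀ y ∈ insert μ.1 μ.2, (μ.1, y) ∉ K)).filter (fun μ => Prod.fst μ = i)
    from rfl] at this
  rw [this]
  split_ifs <;> simp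
-- AUXC END

/-- **Eigenfunctions of the uniform `k`-player dynamic.** For every subset `K` of coordinate
indices and every state `S`, `Σ_{S'} P_k(S, S') e_K(S') = λ_{k,K} · e_K(S)`, where
`λ_{k,K} = [Σ_{i : (i,i) ∉ K} C(n−1−|K_i|, k−1)] / [n · C(n−1, k−1)]` and
`K_i = {j ≠ i : (i,j) ∈ K}`. (The `2^{n²}` pairs `(λ_{k,K}, e_K)` form a complete
eigensystem of `P_k`.) -/
theorem uKernel_eigen (n k : ℕ) (hk : 1 < k) (hkn : k ≤ n)
    (K : Finset (Fin n × Fin n)) (S : NetState n) :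
    (∑ S' : NetState n, uKernel n k S S' * charFn n K S')
      = lam n k K * charFn n K S := by
  classical
  set D : ℝ := (n : ℝ) * (((n - 1).choose (k - 1) : ℕ) : ℝ) with hD
  set c : ℝ := 1 / (D * 2 ^ k) with hc
  have step1 : (∑ S' : NetState n, uKernel n k S S' * charFn n K S')
      = ∑ μ ∈ meetings n k, ∑ S' ∈ nbhd n μ.1 μ.2 S, c * charFn n K S' := by
    have expand : ∀ S' : NetState n, uKernel n k S S' * charFn n K S'
        = ∑ μ ∈ (meetings n k).filter (fun μ => S' ∈ nbhd n μ.1 μ.2 S),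
            c * charFn n K S' := by
      intro S'
      rw [uKernel, Finset.sum_mul]
    simp only [expand]
    rw [Finset.sum_comm' (s := (univ : Finset (NetState n)))
      (t := fun S' => (meetings n k).filter (fun μ => S' ∈ nbhd n μ.1 μ.2 S))
      (t' := meetings n k)
      (s' := fun μ => univ.filter (fun S' => S' ∈ nbhd n μ.1 μ.2 S))
      (fun S' μ => by simp only [Finset.mem_filter, mem_univ, true_and]; tauto)]
    refine Finset.sum_congr rfl fun μ _ => ?_
    rw [show univ.filter (fun S' => S' ∈ nbhd n μ.1 μ.2 S) = nbhd n μ.1 μ.2 S by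
      rw [Finset.filter_mem_eq_inter, Finset.univ_inter]]
  rw [step1]
  have step2 : ∀ μ ∈ meetings n k,
      ∑ S' ∈ nbhd n μ.1 μ.2 S, c * charFn n K S'
        = if ∀ y ∈ insert μ.1 μ.2, (μ.1, y) ∉ K then c * ((2:ℝ) ^ k * charFn n K S)
          else 0 := by
    intro μ hμ
    simp only [meetings, Finset.mem_filter, mem_univ, true_and] at hμ
    rw [← Finset.mul_sum, nbhd_sum n k (le_of_lt hk) μ.1 μ.2 hμ.1 hμ.2 K S]
    split_ifs <;> ring
  rw [Finset.sum_congr rfl step2, Finset.sum_ite, Finset.sum_const_zero, add_zero,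
    Finset.sum_const, nsmul_eq_mul, count_meetings n k K]
  have h2 : (2:ℝ) ^ k ≠ 0 := pow_ne_zero _ two_ne_zero
  have hc2 : c * (2:ℝ) ^ k = 1 / D := by
    rw [hc, one_div, one_div, mul_inv, mul_assoc, inv_mul_cancel₀ h2, mul_one]
  rw [lam]
  rw [show (∑ i ∈ univ.filter (fun i => (i, i) ∉ K),
        (((n - 1 - (lamIdx n K i).card).choose (k - 1) : ℕ) : ℝ))
      / ((n : ℝ) * (((n - 1).choose (k - 1) : ℕ) : ℝ))
    = (∑ i ∈ univ.filter (fun i => (i, i) ∉ K),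
        (((n - 1 - (lamIdx n K i).card).choose (k - 1) : ℕ) : ℝ)) * (1 / D) from
    div_eq_mul_one_div _ _]
  rw [← hc2]
  ring
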